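/- (Lemma 1) Let P_n(λ) = det(A_n − λI) be the characteristic polynomial of the matrix A_n (in the convention det(A_n − λI)). Then for every n ≥ 7 the recurrence P_n(λ) = λ²(P_{n−2}(λ) − P_{n−4}(λ)) holds as an identity of polynomials. -/

import Mathlib

/-- Adjacency matrix of the composability digraph of the `n` first-order
differential operations `∇_1, …, ∇_n` on `ℝⁿ` (index `i : Fin n` represents
the operation `∇_{i+1}`): there is an edge `i → j` iff `j = i + 1` or
`i + j = n + 1` (in the 1-based indexing of the paper). -/
def adjA (n : ℕ) : Matrix (Fin n) (Fin n) ℤ :=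
  Matrix.of fun i j =>
    if (j : ℕ) = (i : ℕ) + 1 ∨ (i : ℕ) + (j : ℕ) + 2 = n + 1 then 1 else 0

/-- `fCount n k` is the number of meaningful `k`-th order compositions of the
differential operations on `ℝⁿ`, i.e. the number of sequences
`(i_1, …, i_k) ∈ {1, …, n}^k` each consecutive pair of which is composable. -/
def fCount (n k : ℕ) : ℕ :=
  (Finset.univ.filter fun s : Fin k → Fin n =>
    ∀ i j : Fin k, (j : ℕ) = (i : ℕ) + 1 → adjA n (s i) (s j) = 1).card

/-- `Pp n` is the polynomial `P_n(λ) = det (A_n - λ I)`. -/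
noncomputable def Pp (n : ℕ) : Polynomial ℤ :=
  ((adjA n).map Polynomial.C - Matrix.scalar (Fin n) Polynomial.X).det

open Polynomial Matrix

/-- The matrix `A_n - λ I` as an explicit matrix of polynomials. -/
noncomputable def Mm (n : ℕ) : Matrix (Fin n) (Fin n) (Polynomial ℤ) :=
  Matrix.of fun i j =>
    (if (j : ℕ) = (i : ℕ) + 1 ∨ (i : ℕ) + (j : ℕ) + 2 = n + 1 then 1 else 0)
      - (if (i : ℕ) = (j : ℕ) then X else 0)

/-- Auxiliary family: diagonal `1`, subdiagonal `-X`, antidiagonal `i+j+1 = s`. -/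
noncomputable def Dp (s : ℕ) : Matrix (Fin s) (Fin s) (Polynomial ℤ) :=
  Matrix.of fun i j =>
    (if (i : ℕ) = (j : ℕ) ∨ (i : ℕ) + (j : ℕ) + 1 = s then 1 else 0)
      - (if (i : ℕ) = (j : ℕ) + 1 then X else 0)

/-- Auxiliary family: diagonal `1`, subdiagonal `-X`, antidiagonal `i+j+2 = t`. -/
noncomputable def Dm (t : ℕ) : Matrix (Fin t) (Fin t) (Polynomial ℤ) :=
  Matrix.of fun i j =>
    (if (i : ℕ) = (j : ℕ) ∨ (i : ℕ) + (j : ℕ) + 2 = t then 1 else 0)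
      - (if (i : ℕ) = (j : ℕ) + 1 then X else 0)

/-- Auxiliary family: superdiagonal `1`, diagonal `-X`, antidiagonal `i+j = s`. -/
noncomputable def Nm (s : ℕ) : Matrix (Fin s) (Fin s) (Polynomial ℤ) :=
  Matrix.of fun i j =>
    (if (j : ℕ) = (i : ℕ) + 1 ∨ (i : ℕ) + (j : ℕ) = s then 1 else 0)
      - (if (i : ℕ) = (j : ℕ) then X else 0)

lemma Pp_eq_det (n : ℕ) : Pp n = (Mm n).det := by
  unfold Pp
  congr 1
  refine Matrix.ext fun i j => ?_
  simp only [Matrix.sub_apply, Matrix.map_apply, adjA, Matrix.of_apply, Mm,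
    Matrix.scalar_apply, Matrix.diagonal_apply, apply_ite Polynomial.C, Polynomial.C_1,
    map_zero, Fin.ext_iff]

lemma lemA (t : ℕ) : (Dm (t + 1)).det = (Dp t).det := by
  rw [Matrix.det_succ_column (Dm (t + 1)) (Fin.last t),
    Finset.sum_eq_single_of_mem (Fin.last t) (Finset.mem_univ _)]
  · have h1 : Dm (t + 1) (Fin.last t) (Fin.last t) = 1 := by
      simp only [Dm, Matrix.of_apply, Fin.val_last]
      split_ifs <;> first | rfl | ring1 | (exfalso; omega) | (exfalso; simp_all) | (exfalso; simp_all <;> omega) | simp_all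
    have h2 : (Dm (t + 1)).submatrix (Fin.last t).succAbove (Fin.last t).succAbove = Dp t := by
      refine Matrix.ext fun i j => ?_
      simp only [Matrix.submatrix_apply, Fin.succAbove_last, Dm, Dp, Matrix.of_apply,
        Fin.coe_castSucc]
      split_ifs <;> first | rfl | ring1 | (exfalso; omega) | (exfalso; simp_all) | (exfalso; simp_all <;> omega) | simp_all
    have h3 : ((-1 : Polynomial ℤ)) ^ ((Fin.last t : ℕ) + (Fin.last t : ℕ)) = 1 := by
      rw [Fin.val_last, ← two_mul, pow_mul]
      norm_num
    rw [h1, h2, h3]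
    ring
  · intro b _ hb
    have hb1 : (b : ℕ) ≠ t := by simpa [Fin.ext_iff] using hb
    have hb2 := b.isLt
    have hz : Dm (t + 1) b (Fin.last t) = 0 := by
      simp only [Dm, Matrix.of_apply, Fin.val_last]
      split_ifs <;> first | rfl | ring1 | (exfalso; omega) | (exfalso; simp_all) | (exfalso; simp_all <;> omega) | simp_all
    rw [hz]
    ring

lemma lemN (s : ℕ) : (Nm (s + 1)).det = -X * (Mm s).det := by
  rw [Matrix.det_succ_column (Nm (s + 1)) 0,
    Finset.sum_eq_single_of_mem (0 : Fin (s + 1)) (Finset.mem_univ _)]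
  · have h1 : Nm (s + 1) 0 0 = -X := by
      simp only [Nm, Matrix.of_apply, Fin.val_zero]
      split_ifs <;> first | rfl | ring1 | (exfalso; omega) | (exfalso; simp_all)
    have h2 : (Nm (s + 1)).submatrix (0 : Fin (s + 1)).succAbove (0 : Fin (s + 1)).succAbove
        = Mm s := by
      refine Matrix.ext fun i j => ?_
      simp only [Matrix.submatrix_apply, Fin.succAbove_zero, Nm, Mm, Matrix.of_apply,
        Fin.val_succ]
      split_ifs <;> first | rfl | ring1 | (exfalso; omega) | (exfalso; simp_all)
    rw [h1, h2]
    simp only [Fin.val_zero]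
    ring
  · intro b _ hb
    have hb1 : (b : ℕ) ≠ 0 := fun h => hb (Fin.ext (by simp [h]))
    have hb2 := b.isLt
    have hz : Nm (s + 1) b 0 = 0 := by
      simp only [Nm, Matrix.of_apply, Fin.val_zero]
      split_ifs <;> first | rfl | ring1 | (exfalso; omega) | (exfalso; simp only [false_or, add_zero] at *; omega) | simp [hb1]
    rw [hz]
    ring

lemma lemB (m : ℕ) :
    (Dp (m + 2)).det = (Dm (m + 1)).det + (-1) ^ (m + 1) * (Mm (m + 1)).det := by
  rw [Matrix.det_succ_row (Dp (m + 2)) 0, Fin.sum_univ_succ,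
    Finset.sum_eq_single_of_mem (Fin.last m) (Finset.mem_univ _), Fin.succ_last]
  · have h0 : Dp (m + 2) 0 0 = 1 := by
      simp only [Dp, Matrix.of_apply, Fin.val_zero]
      split_ifs <;> first | rfl | ring1 | (exfalso; omega) | (exfalso; simp_all)
    have hm0 : (Dp (m + 2)).submatrix (0 : Fin (m + 2)).succAbove (0 : Fin (m + 2)).succAbove
        = Dm (m + 1) := by
      refine Matrix.ext fun i j => ?_
      simp only [Matrix.submatrix_apply, Fin.succAbove_zero, Dp, Dm, Matrix.of_apply,
        Fin.val_succ]
      split_ifs <;> first | rfl | ring1 | (exfalso; omega) | (exfalso; simp_all)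
    have hlast : Dp (m + 2) 0 (Fin.last (m + 1)) = 1 := by
      simp only [Dp, Matrix.of_apply, Fin.val_zero, Fin.val_last]
      split_ifs <;> first | rfl | ring1 | (exfalso; omega) | (exfalso; simp_all)
    have hm1 : (Dp (m + 2)).submatrix (0 : Fin (m + 2)).succAbove
        (Fin.last (m + 1)).succAbove = Mm (m + 1) := by
      refine Matrix.ext fun i j => ?_
      simp only [Matrix.submatrix_apply, Fin.succAbove_zero, Fin.succAbove_last, Dp, Mm,
        Matrix.of_apply, Fin.val_succ, Fin.coe_castSucc]
      split_ifs <;> first | rfl | ring1 | (exfalso; omega) | (exfalso; simp_all)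
    rw [h0, hm0, hlast, hm1]
    simp only [Fin.val_zero, Fin.val_last, Nat.zero_add, pow_zero, Nat.succ_eq_add_one]
    ring
  · intro b _ hb
    have hb1 : (b : ℕ) ≠ m := by simpa [Fin.ext_iff] using hb
    have hb2 := b.isLt
    have hz : Dp (m + 2) 0 b.succ = 0 := by
      simp only [Dp, Matrix.of_apply, Fin.val_zero, Fin.val_succ]
      split_ifs <;> first | rfl | ring1 | (exfalso; omega) | (exfalso; simp_all)
    rw [hz]
    ring

lemma lemC (k : ℕ) :
    (Mm (k + 4)).det = (-1) ^ (k + 3) * (Dp (k + 3)).det + X ^ 2 * (Mm (k + 2)).det := by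
  rw [Matrix.det_succ_row (Mm (k + 4)) (Fin.last (k + 3)), Fin.sum_univ_succ,
    Finset.sum_eq_single_of_mem (Fin.last (k + 2)) (Finset.mem_univ _), Fin.succ_last]
  · have h0 : Mm (k + 4) (Fin.last (k + 3)) 0 = 1 := by
      simp only [Mm, Matrix.of_apply, Fin.val_zero, Fin.val_last]
      split_ifs <;> first | rfl | ring1 | (exfalso; omega) | (exfalso; simp_all)
    have hm0 : (Mm (k + 4)).submatrix (Fin.last (k + 3)).succAbove
        (0 : Fin (k + 4)).succAbove = Dp (k + 3) := by
      refine Matrix.ext fun i j => ?_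
      simp only [Matrix.submatrix_apply, Fin.succAbove_zero, Fin.succAbove_last, Mm, Dp,
        Matrix.of_apply, Fin.val_succ, Fin.coe_castSucc]
      split_ifs <;> first | rfl | ring1 | (exfalso; omega) | (exfalso; simp_all)
    have hlast : Mm (k + 4) (Fin.last (k + 3)) (Fin.last (k + 3)) = -X := by
      simp only [Mm, Matrix.of_apply, Fin.val_last]
      split_ifs <;> first | rfl | ring1 | (exfalso; omega) | (exfalso; simp_all)
    have hm1 : (Mm (k + 4)).submatrix (Fin.last (k + 3)).succAbove
        (Fin.last (k + 3)).succAbove = Nm (k + 3) := by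
      refine Matrix.ext fun i j => ?_
      simp only [Matrix.submatrix_apply, Fin.succAbove_last, Mm, Nm, Matrix.of_apply,
        Fin.coe_castSucc]
      split_ifs <;> first | rfl | ring1 | (exfalso; omega) | (exfalso; simp_all)
    have hN : (Nm (k + 3)).det = -X * (Mm (k + 2)).det := lemN (k + 2)
    rw [h0, hm0, hlast, hm1, hN]
    simp only [Fin.val_zero, Fin.val_last, Nat.add_zero]
    have hsq : ((-1 : Polynomial ℤ)) ^ ((k + 3) + (k + 3)) = 1 := by
      rw [← two_mul, pow_mul]
      norm_num
    rw [hsq]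
    ring
  · intro b _ hb
    have hb1 : (b : ℕ) ≠ k + 2 := by simpa [Fin.ext_iff] using hb
    have hb2 := b.isLt
    have hz : Mm (k + 4) (Fin.last (k + 3)) b.succ = 0 := by
      simp only [Mm, Matrix.of_apply, Fin.val_last, Fin.val_succ]
      split_ifs <;> first | rfl | ring1 | (exfalso; omega) | (exfalso; simp_all)
    rw [hz]
    ring


/-- Lemma 1: `P_n(λ) = λ² (P_{n-2}(λ) - P_{n-4}(λ))` for `n ≥ 7`. -/
theorem Pp_recurrence (n : ℕ) (hn : 7 ≤ n) :
    Pp n = Polynomial.X ^ 2 * (Pp (n - 2) - Pp (n - 4)) := by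
  obtain ⟨k, rfl⟩ : ∃ k, n = k + 7 := ⟨n - 7, by omega⟩
  have h2 : k + 7 - 2 = k + 5 := by omega
  have h4 : k + 7 - 4 = k + 3 := by omega
  rw [h2, h4, Pp_eq_det, Pp_eq_det, Pp_eq_det]
  have e1 : (Mm (k + 7)).det
      = (-1 : Polynomial ℤ) ^ (k + 6) * (Dp (k + 6)).det + X ^ 2 * (Mm (k + 5)).det :=
    lemC (k + 3)
  have e2 : (Dp (k + 6)).det
      = (Dm (k + 5)).det + (-1 : Polynomial ℤ) ^ (k + 5) * (Mm (k + 5)).det :=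
    lemB (k + 4)
  have e3 : (Dm (k + 5)).det = (Dp (k + 4)).det := lemA (k + 4)
  have e4 : (Mm (k + 5)).det
      = (-1 : Polynomial ℤ) ^ (k + 4) * (Dp (k + 4)).det + X ^ 2 * (Mm (k + 3)).det :=
    lemC (k + 1)
  have p6 : ((-1 : Polynomial ℤ)) ^ (k + 6) = (-1) ^ k := by
    rw [pow_add]; norm_num
  have p5 : ((-1 : Polynomial ℤ)) ^ (k + 5) = -(-1) ^ k := by
    rw [pow_add]; ring_nf
  have p4 : ((-1 : Polynomial ℤ)) ^ (k + 4) = (-1) ^ k := by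
    rw [pow_add]; norm_num
  rw [p6] at e1
  rw [p5] at e2
  rw [p4] at e4
  have hsq : ((-1 : Polynomial ℤ)) ^ k * (-1) ^ k = 1 := by
    rw [← pow_add, ← two_mul, pow_mul]
    norm_num
  linear_combination e1 + (-1 : Polynomial ℤ) ^ k * e2 + (-1 : Polynomial ℤ) ^ k * e3 - e4
    - (Mm (k + 5)).det * hsq
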